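/- Let p ∈ (0,1]^d, P = diag(p), let Σ be a d×d positive definite real matrix, and m ∈ ℝ^d. Then the matrix Σ^NA := P Σ P + P(I_d − P) diag(Σ) + P(I_d − P) diag(m) diag(m) is positive definite. -/

import Mathlib

open Matrix

lemma PSigP_posDef {d : ℕ} (p : Fin d → ℝ) (Sig : Matrix (Fin d) (Fin d) ℝ)
    (hp : ∀ i, 0 < p i) (hSig : Sig.PosDef) :
    (Matrix.diagonal p * Sig * Matrix.diagonal p).PosDef := by
  have hH : (Matrix.diagonal p * Sig * Matrix.diagonal p).IsHermitian := by
    have : (Matrix.diagonal p)ᴴ = Matrix.diagonal p := by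
      simp [conjTranspose, Matrix.diagonal_transpose]
    calc (Matrix.diagonal p * Sig * Matrix.diagonal p)ᴴ
        = (Matrix.diagonal p)ᴴ * Sigᴴ * (Matrix.diagonal p)ᴴ := by
          simp [conjTranspose_mul, mul_assoc]
      _ = Matrix.diagonal p * Sig * Matrix.diagonal p := by rw [this, hSig.isHermitian.eq]
  refine Matrix.PosDef.of_dotProduct_mulVec_pos hH (fun x hx => ?_)
  have hPx : (Matrix.diagonal p) *ᵥ x ≠ 0 := by
    intro h
    apply hx
    funext i
    have := congrFun h i
    simp [mulVec_diagonal] at this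
    rcases this with h1 | h1
    · exact absurd h1 (hp i).ne'
    · exact h1
  have key : star x ⬝ᵥ (Matrix.diagonal p * Sig * Matrix.diagonal p) *ᵥ x
      = star ((Matrix.diagonal p) *ᵥ x) ⬝ᵥ Sig *ᵥ ((Matrix.diagonal p) *ᵥ x) := by
    have hstar : star ((Matrix.diagonal p) *ᵥ x) = star x ᵥ* Matrix.diagonal p := by
      funext i
      simp [vecMul_diagonal, mulVec_diagonal, mul_comm]
    rw [← mulVec_mulVec, ← mulVec_mulVec, dotProduct_mulVec, hstar]
  rw [key]
  exact hSig.dotProduct_mulVec_pos hPx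

/-- **Positive definiteness of the covariance of a zero-imputed vector.**
For `p ∈ (0,1]^d`, `P = diag(p)`, a positive definite `Σ` and `m ∈ ℝ^d`, the matrix
`Σ^NA := P Σ P + P(I−P) diag(Σ) + P(I−P) diag(m) diag(m)` is positive definite. -/
theorem maskedCov_posDef
    {d : ℕ} (p m : Fin d → ℝ) (Sig : Matrix (Fin d) (Fin d) ℝ)
    (hp : ∀ i, p i ∈ Set.Ioc (0 : ℝ) 1) (hSig : Sig.PosDef) :
    (Matrix.diagonal p * Sig * Matrix.diagonal p
      + Matrix.diagonal p * (1 - Matrix.diagonal p) * Matrix.diagonal (fun i => Sig i i)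
      + Matrix.diagonal p * (1 - Matrix.diagonal p)
          * (Matrix.diagonal m * Matrix.diagonal m)).PosDef := by
  have hrw : Matrix.diagonal p * (1 - Matrix.diagonal p) * Matrix.diagonal (fun i => Sig i i)
      + Matrix.diagonal p * (1 - Matrix.diagonal p) * (Matrix.diagonal m * Matrix.diagonal m)
      = Matrix.diagonal (fun i => p i * (1 - p i) * (Sig i i + m i * m i)) := by
    ext i j
    by_cases h : i = j
    · subst h; simp [Matrix.mul_apply, Matrix.one_apply, Matrix.diagonal_apply,
        Finset.sum_ite_eq]; ring
    · simp [Matrix.mul_apply, Matrix.one_apply, Matrix.diagonal_apply, h,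
        Finset.sum_ite_eq]
  have h1 : (Matrix.diagonal p * Sig * Matrix.diagonal p).PosDef :=
    PSigP_posDef p Sig (fun i => (hp i).1) hSig
  have h2 : (Matrix.diagonal (fun i => p i * (1 - p i) * (Sig i i + m i * m i))).PosSemidef := by
    rw [Matrix.posSemidef_diagonal_iff]
    intro i
    have hSii : 0 < Sig i i := by
      have := hSig.dotProduct_mulVec_pos (x := Pi.single i 1) (by
        intro h
        have := congrFun h i
        simp at this)
      simpa [dotProduct, mulVec, Pi.single_apply] using this
    have := (hp i)
    have h1 : 0 ≤ p i * (1 - p i) :=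
      mul_nonneg this.1.le (by linarith [this.2])
    have h2 : 0 ≤ Sig i i + m i * m i := by nlinarith [mul_self_nonneg (m i)]
    exact mul_nonneg h1 h2
  rw [add_assoc, hrw]
  exact h1.add_posSemidef h2
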